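/- (Duality between bipartite states and channels, positivity direction) Let ρ be a density operator on H ⊗ K (finite-dimensional) whose restriction to H has spectral resolution with strictly positive eigenvalues r_k and eigenvectors e_k. Define T on B(K) by ⟨e'_k, T(|e_μ⟩⟨e_ν|) e'_ℓ⟩ = r_k^{-1/2} r_ℓ^{-1/2} ρ(|e_k ⊗ e_μ⟩⟨e_ℓ ⊗ e_ν|), where e'_k is an orthonormal basis of a space H' of dimension rank(ρ_H). Then T is completely positive and unital, and ρ = σ ∘ (id_H ⊗ T) where σ is the pure state given by Ψ = Σ_k √r_k e_k ⊗ e'_k. -/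

import Mathlib

open Finset Matrix ComplexOrder

lemma aux_trace_zero {a b : Type*} [Fintype a] [Fintype b] {D : Matrix a b ℂ}
    (h : (Dᴴ * D).trace = 0) : D = 0 := by
  have h1 : ((∑ j, ∑ i, Complex.normSq (D i j) : ℝ) : ℂ) = 0 := by
    rw [← h]
    simp only [Matrix.trace, Matrix.diag, Matrix.mul_apply, Matrix.conjTranspose_apply]
    push_cast
    exact Finset.sum_congr rfl fun j _ => Finset.sum_congr rfl fun i _ =>
      Complex.normSq_eq_conj_mul_self
  rw [Complex.ofReal_eq_zero] at h1
  ext i j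
  have h2 := (Finset.sum_eq_zero_iff_of_nonneg (fun j _ => Finset.sum_nonneg
    (fun i _ => Complex.normSq_nonneg _))).mp h1 j (Finset.mem_univ j)
  have h3 := (Finset.sum_eq_zero_iff_of_nonneg (fun i _ => Complex.normSq_nonneg _)).mp
    h2 i (Finset.mem_univ i)
  simpa using Complex.normSq_eq_zero.mp h3

open scoped MatrixOrder in
lemma psd_exists_conjTranspose_mul_self {ι : Type*} [Fintype ι] [DecidableEq ι]
    {A : Matrix ι ι ℂ} (hA : A.PosSemidef) : ∃ B : Matrix ι ι ℂ, A = Bᴴ * B := by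
  obtain ⟨B, hB⟩ := CStarAlgebra.nonneg_iff_eq_star_mul_self.mp hA.nonneg
  exact ⟨B, hB⟩

lemma sc3 {α β γ : Type*} [Fintype α] [Fintype β] [Fintype γ] (f : α → β → γ → ℂ) :
    ∑ a, ∑ b, ∑ c, f a b c = ∑ c, ∑ a, ∑ b, f a b c := by
  calc ∑ a, ∑ b, ∑ c, f a b c = ∑ a, ∑ c, ∑ b, f a b c :=
        Finset.sum_congr rfl fun a _ => Finset.sum_comm
    _ = ∑ c, ∑ a, ∑ b, f a b c := Finset.sum_comm

lemma sc4 {α β γ δ : Type*} [Fintype α] [Fintype β] [Fintype γ] [Fintype δ]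
    (f : α → β → γ → δ → ℂ) :
    ∑ a, ∑ b, ∑ c, ∑ d, f a b c d = ∑ c, ∑ d, ∑ a, ∑ b, f a b c d := by
  calc ∑ a, ∑ b, ∑ c, ∑ d, f a b c d = ∑ c, ∑ a, ∑ b, ∑ d, f a b c d :=
        sc3 (fun a b c => ∑ d, f a b c d)
    _ = ∑ c, ∑ d, ∑ a, ∑ b, f a b c d :=
        Finset.sum_congr rfl fun c _ => sc3 (fun a b d => f a b c d)

lemma mv4 {α β γ δ : Type*} [Fintype α] [Fintype β] [Fintype γ] [Fintype δ]
    (f : α → β → γ → δ → ℂ) :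
    ∑ a, ∑ b, ∑ c, ∑ d, f a b c d = ∑ d, ∑ a, ∑ b, ∑ c, f a b c d := by
  calc ∑ a, ∑ b, ∑ c, ∑ d, f a b c d = ∑ a, ∑ d, ∑ b, ∑ c, f a b c d :=
        Finset.sum_congr rfl fun a _ => sc3 (fun b c d => f a b c d)
    _ = ∑ d, ∑ a, ∑ b, ∑ c, f a b c d := Finset.sum_comm

lemma mv5 {α β γ δ ε : Type*} [Fintype α] [Fintype β] [Fintype γ] [Fintype δ] [Fintype ε]
    (f : α → β → γ → δ → ε → ℂ) :
    ∑ a, ∑ b, ∑ c, ∑ d, ∑ x, f a b c d x = ∑ x, ∑ a, ∑ b, ∑ c, ∑ d, f a b c d x := by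
  calc ∑ a, ∑ b, ∑ c, ∑ d, ∑ x, f a b c d x = ∑ a, ∑ x, ∑ b, ∑ c, ∑ d, f a b c d x :=
        Finset.sum_congr rfl fun a _ => mv4 (fun b c d x => f a b c d x)
    _ = ∑ x, ∑ a, ∑ b, ∑ c, ∑ d, f a b c d x := Finset.sum_comm

lemma mv6 {α β γ δ ε ζ : Type*} [Fintype α] [Fintype β] [Fintype γ] [Fintype δ] [Fintype ε]
    [Fintype ζ] (f : α → β → γ → δ → ε → ζ → ℂ) :
    ∑ a, ∑ b, ∑ c, ∑ d, ∑ x, ∑ g, f a b c d x g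
      = ∑ g, ∑ a, ∑ b, ∑ c, ∑ d, ∑ x, f a b c d x g := by
  calc ∑ a, ∑ b, ∑ c, ∑ d, ∑ x, ∑ g, f a b c d x g
      = ∑ a, ∑ g, ∑ b, ∑ c, ∑ d, ∑ x, f a b c d x g :=
        Finset.sum_congr rfl fun a _ => mv5 (fun b c d x g => f a b c d x g)
    _ = ∑ g, ∑ a, ∑ b, ∑ c, ∑ d, ∑ x, f a b c d x g := Finset.sum_comm

lemma scA {α₁ α₂ α₃ α₄ α₅ α₆ : Type*} [Fintype α₁] [Fintype α₂] [Fintype α₃] [Fintype α₄]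
    [Fintype α₅] [Fintype α₆] (f : α₁ → α₂ → α₃ → α₄ → α₅ → α₆ → ℂ) :
    ∑ a, ∑ b, ∑ c, ∑ d, ∑ x, ∑ g, f a b c d x g
      = ∑ g, ∑ c, ∑ a, ∑ x, ∑ b, ∑ d, f a b c d x g := by
  calc ∑ a, ∑ b, ∑ c, ∑ d, ∑ x, ∑ g, f a b c d x g
      = ∑ g, ∑ a, ∑ b, ∑ c, ∑ d, ∑ x, f a b c d x g := mv6 f
    _ = ∑ g, ∑ c, ∑ a, ∑ b, ∑ d, ∑ x, f a b c d x g :=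
        Finset.sum_congr rfl fun g _ =>
          sc3 (fun a b c => ∑ d, ∑ x, f a b c d x g)
    _ = ∑ g, ∑ c, ∑ a, ∑ x, ∑ b, ∑ d, f a b c d x g :=
        Finset.sum_congr rfl fun g _ => Finset.sum_congr rfl fun c _ =>
          Finset.sum_congr rfl fun a _ => sc3 (fun b d x => f a b c d x g)

set_option maxHeartbeats 1000000 in
/-- Duality between bipartite states and channels: the map T defined from a bipartite
    density matrix ρ by ⟨e'_k, T(|e_μ⟩⟨e_ν|) e'_ℓ⟩ = r_k^{-1/2} r_ℓ^{-1/2} ρ(|e_k⊗e_μ⟩⟨e_ℓ⊗e_ν|)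
    is completely positive and unital, and ρ = σ ∘ (id ⊗ T) for the pure state σ given
    by Ψ = Σ_k √r_k e_k ⊗ e'_k. -/
theorem stmt10 {m n r : ℕ}
    (ρ : Matrix (Fin m × Fin n) (Fin m × Fin n) ℂ)
    (hρ : ρ.PosSemidef) (htr : ρ.trace = 1)
    (rr : Fin r → ℝ) (hrpos : ∀ k, 0 < rr k)
    (e : Fin r → Fin m → ℂ)
    (he : ∀ a b, ∑ i, star (e a i) * e b i = if a = b then (1 : ℂ) else 0)
    (hspec : ∀ i j, ∑ l, ρ (i, l) (j, l) = ∑ k, (rr k : ℂ) * e k i * star (e k j))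
    (T : Matrix (Fin n) (Fin n) ℂ → Matrix (Fin r) (Fin r) ℂ)
    (hT : ∀ B k l, T B k l = ∑ μ, ∑ ν, B μ ν
        * ((Real.sqrt (rr k) : ℂ))⁻¹ * ((Real.sqrt (rr l) : ℂ))⁻¹
        * (∑ j, ∑ i, ρ (j, ν) (i, μ) * e k i * star (e l j)))
    (Ψ : Fin m × Fin r → ℂ)
    (hΨ : ∀ p, Ψ p = (Real.sqrt (rr p.2) : ℂ) * e p.2 p.1) :
    (∀ (k' : ℕ) (M : Matrix (Fin n × Fin k') (Fin n × Fin k') ℂ), M.PosSemidef →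
      (Matrix.of fun p q : Fin r × Fin k' =>
        T (Matrix.of fun μ ν => M (μ, p.2) (ν, q.2)) p.1 q.1).PosSemidef) ∧
    T 1 = 1 ∧
    (∀ (A : Matrix (Fin m) (Fin m) ℂ) (B : Matrix (Fin n) (Fin n) ℂ),
      (ρ * Matrix.of fun p q : Fin m × Fin n => A p.1 q.1 * B p.2 q.2).trace =
      ((Matrix.of fun p q : Fin m × Fin r => Ψ p * star (Ψ q))
        * Matrix.of fun p q : Fin m × Fin r => A p.1 q.1 * T B p.2 q.2).trace) := by
  have he' : ∀ a b, ∑ i, e a i * star (e b i) = if a = b then (1 : ℂ) else 0 := by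
    intro a b
    have := congrArg star (he a b)
    simpa [star_sum, mul_comm, eq_comm] using this
  set Q : Matrix (Fin m) (Fin m) ℂ := Matrix.of (fun i j => ∑ k, e k i * star (e k j))
    with hQdef
  have hQapp : ∀ i j, Q i j = ∑ k, e k i * star (e k j) := fun i j => rfl
  have hQstar : ∀ i j, star (Q i j) = Q j i := by
    intro i j
    simp [hQapp, star_sum, mul_comm]
  obtain ⟨C, hC⟩ := psd_exists_conjTranspose_mul_self hρ
  have hρapp : ∀ a b, ρ a b = ∑ x, star (C x a) * C x b := by
    intro a b; rw [hC]; simp [Matrix.mul_apply, Matrix.conjTranspose_apply]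
  -- Q is idempotent
  have hQQ : ∀ i j, (∑ x, Q i x * Q x j) = Q i j := by
    intro i j
    have expand : ∀ x, Q i x * Q x j
        = ∑ a, ∑ b, e a i * star (e b j) * (star (e a x) * e b x) := by
      intro x
      rw [hQapp, hQapp, Finset.sum_mul_sum]
      exact Finset.sum_congr rfl fun a _ => Finset.sum_congr rfl fun b _ => by ring
    calc ∑ x, Q i x * Q x j
        = ∑ x, ∑ a, ∑ b, e a i * star (e b j) * (star (e a x) * e b x) :=
          Finset.sum_congr rfl fun x _ => expand x
      _ = ∑ a, ∑ b, ∑ x, e a i * star (e b j) * (star (e a x) * e b x) :=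
          (sc3 fun a b x => e a i * star (e b j) * (star (e a x) * e b x)).symm
      _ = ∑ a, ∑ b, e a i * star (e b j) * (∑ x, star (e a x) * e b x) :=
          Finset.sum_congr rfl fun a _ => Finset.sum_congr rfl fun b _ =>
            (Finset.mul_sum _ _ _).symm
      _ = Q i j := by
          rw [hQapp]
          simp only [he, mul_ite, mul_one, mul_zero, Finset.sum_ite_eq, Finset.mem_univ,
            if_true]
  -- ambient projector
  set Qb : Matrix (Fin m × Fin n) (Fin m × Fin n) ℂ :=
    Matrix.of (fun p q => Q p.1 q.1 * (if p.2 = q.2 then (1:ℂ) else 0)) with hQbdef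
  have hQbH : Qbᴴ = Qb := by
    ext p q
    simp only [Matrix.conjTranspose_apply, hQbdef, Matrix.of_apply, star_mul']
    rw [hQstar]
    by_cases h : p.2 = q.2 <;> simp [h, eq_comm]
  set Pb : Matrix (Fin m × Fin n) (Fin m × Fin n) ℂ := 1 - Qb with hPbdef
  have hPbH : Pbᴴ = Pb := by
    rw [hPbdef, Matrix.conjTranspose_sub, Matrix.conjTranspose_one, hQbH]
  have hQbQb : Qb * Qb = Qb := by
    ext p q
    rw [Matrix.mul_apply, Fintype.sum_prod_type]
    calc ∑ x, ∑ y, Qb (p.1, p.2) (x, y) * Qb (x, y) (q.1, q.2)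
        = ∑ x, ∑ y, (Q p.1 x * (if p.2 = y then (1:ℂ) else 0))
            * (Q x q.1 * (if y = q.2 then (1:ℂ) else 0)) := rfl
      _ = ∑ x, Q p.1 x * Q x q.1 * (if p.2 = q.2 then (1:ℂ) else 0) := by
          refine Finset.sum_congr rfl fun x _ => ?_
          by_cases h : p.2 = q.2
          · simp [h, mul_ite, ite_mul, Finset.sum_ite_eq, Finset.sum_ite_eq']
          · simp only [h, if_false, mul_zero]
            refine Finset.sum_eq_zero fun y _ => ?_
            by_cases h2 : p.2 = y
            · subst h2; simp [h]
            · simp [h2]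
      _ = Qb p q := by
          rw [← Finset.sum_mul, hQQ]
          rfl
  have trρ : ρ.trace = ∑ k, (rr k : ℂ) := by
    calc ρ.trace = ∑ i, ∑ μ, ρ (i,μ) (i,μ) := by
          simp [Matrix.trace, Matrix.diag, Fintype.sum_prod_type]
      _ = ∑ i, ∑ k, (rr k : ℂ) * e k i * star (e k i) := by
          refine Finset.sum_congr rfl fun i _ => ?_
          simpa using hspec i i
      _ = ∑ k, ∑ i, (rr k : ℂ) * e k i * star (e k i) := Finset.sum_comm
      _ = ∑ k, (rr k : ℂ) * ∑ i, e k i * star (e k i) := by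
          refine Finset.sum_congr rfl fun k _ => ?_
          rw [Finset.mul_sum]
          exact Finset.sum_congr rfl fun i _ => by ring
      _ = ∑ k, (rr k : ℂ) := by
          refine Finset.sum_congr rfl fun k _ => ?_
          have h := he' k k
          rw [if_pos rfl] at h
          rw [h, mul_one]
  have trQ : (ρ * Qb).trace = ∑ k, (rr k : ℂ) := by
    calc (ρ * Qb).trace
        = ∑ i, ∑ μ, ∑ j, ∑ ν, ρ (i,μ) (j,ν) * (Q j i * (if ν = μ then (1:ℂ) else 0)) := by
          simp [Matrix.trace, Matrix.diag, Matrix.mul_apply, Fintype.sum_prod_type, hQbdef]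
      _ = ∑ i, ∑ μ, ∑ j, ρ (i,μ) (j,μ) * Q j i := by
          refine Finset.sum_congr rfl fun i _ => Finset.sum_congr rfl fun μ _ =>
            Finset.sum_congr rfl fun j _ => ?_
          simp [mul_ite, Finset.sum_ite_eq', mul_comm]
      _ = ∑ i, ∑ j, (∑ μ, ρ (i,μ) (j,μ)) * Q j i := by
          refine Finset.sum_congr rfl fun i _ => ?_
          rw [Finset.sum_comm]
          exact Finset.sum_congr rfl fun j _ => by rw [Finset.sum_mul]
      _ = ∑ i, ∑ j, ∑ k, ∑ a, (rr k : ℂ) * e k i * star (e k j)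
            * (e a j * star (e a i)) := by
          refine Finset.sum_congr rfl fun i _ => Finset.sum_congr rfl fun j _ => ?_
          rw [hspec i j, hQapp, Finset.sum_mul_sum]
      _ = ∑ k, ∑ a, ∑ i, ∑ j, (rr k : ℂ) * e k i * star (e k j)
            * (e a j * star (e a i)) := sc4 _
      _ = ∑ k, ∑ a, (rr k : ℂ) * ((∑ i, star (e a i) * e k i) * (∑ j, e a j * star (e k j))) := by
          refine Finset.sum_congr rfl fun k _ => Finset.sum_congr rfl fun a _ => ?_
          rw [Finset.sum_mul_sum, Finset.mul_sum]
          refine Finset.sum_congr rfl fun i _ => ?_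
          rw [Finset.mul_sum]
          exact Finset.sum_congr rfl fun j _ => by ring
      _ = ∑ k, (rr k : ℂ) := by
          refine Finset.sum_congr rfl fun k _ => ?_
          simp only [he, he', mul_ite, ite_mul, mul_one, mul_zero, zero_mul]
          simp [Finset.sum_ite_eq']
  have hPP : Pb * Pb = Pb := by
    rw [hPbdef, Matrix.sub_mul, Matrix.one_mul, Matrix.mul_sub, Matrix.mul_one, hQbQb,
      sub_self, sub_zero]
  have trP : (ρ * Pb).trace = 0 := by
    rw [hPbdef, Matrix.mul_sub, Matrix.mul_one, Matrix.trace_sub, trρ, trQ, sub_self]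
  have hCP : C * Pb = 0 := by
    apply aux_trace_zero
    have h1 : (C * Pb)ᴴ * (C * Pb) = Pb * ρ * Pb := by
      rw [Matrix.conjTranspose_mul, hPbH, hC]
      rw [Matrix.mul_assoc, Matrix.mul_assoc, Matrix.mul_assoc]
    rw [h1]
    calc (Pb * ρ * Pb).trace = (Pb * (ρ * Pb)).trace := by rw [Matrix.mul_assoc]
      _ = ((ρ * Pb) * Pb).trace := Matrix.trace_mul_comm _ _
      _ = (ρ * (Pb * Pb)).trace := by rw [Matrix.mul_assoc]
      _ = (ρ * Pb).trace := by rw [hPP]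
      _ = 0 := trP
  have hρP : ρ * Pb = 0 := by
    rw [hC, Matrix.mul_assoc, hCP, Matrix.mul_zero]
  have hPρ : Pb * ρ = 0 := by
    have h := congrArg Matrix.conjTranspose hρP
    rwa [Matrix.conjTranspose_mul, hPbH, hρ.1, Matrix.conjTranspose_zero] at h
  have hQρ : Qb * ρ = ρ := by
    have hh : Qb = 1 - Pb := by rw [hPbdef, sub_sub_cancel]
    rw [hh, Matrix.sub_mul, Matrix.one_mul, hPρ, sub_zero]
  have hρQ : ρ * Qb = ρ := by
    have hh : Qb = 1 - Pb := by rw [hPbdef, sub_sub_cancel]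
    rw [hh, Matrix.mul_sub, Matrix.mul_one, hρP, sub_zero]
  have hQρQ : Qb * ρ * Qb = ρ := by rw [hQρ, hρQ]
  -- entrywise version
  have hkey : ∀ (i : Fin m) (μ : Fin n) (j : Fin m) (ν : Fin n), ρ (i,μ) (j,ν)
      = ∑ i', ∑ j', Q i i' * ρ (i',μ) (j',ν) * Q j' j := by
    intro i μ j ν
    conv_lhs => rw [← hQρQ]
    rw [Matrix.mul_apply, Fintype.sum_prod_type]
    calc ∑ j', ∑ ν', (Qb * ρ) (i,μ) (j',ν') * Qb (j',ν') (j,ν)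
        = ∑ j', ∑ ν', (Qb * ρ) (i,μ) (j',ν') * (Q j' j * (if ν' = ν then (1:ℂ) else 0)) := rfl
      _ = ∑ j', (Qb * ρ) (i,μ) (j',ν) * Q j' j := by
          refine Finset.sum_congr rfl fun j' _ => ?_
          simp [mul_ite, Finset.sum_ite_eq', mul_comm]
      _ = ∑ j', (∑ i', ∑ μ', (Q i i' * (if μ = μ' then (1:ℂ) else 0)) * ρ (i',μ') (j',ν))
            * Q j' j := by
          refine Finset.sum_congr rfl fun j' _ => ?_
          rw [Matrix.mul_apply, Fintype.sum_prod_type]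
          rfl
      _ = ∑ j', (∑ i', Q i i' * ρ (i',μ) (j',ν)) * Q j' j := by
          refine Finset.sum_congr rfl fun j' _ => ?_
          congr 1
          refine Finset.sum_congr rfl fun i' _ => ?_
          simp [ite_mul, mul_ite, Finset.sum_ite_eq]
      _ = ∑ i', ∑ j', Q i i' * ρ (i',μ) (j',ν) * Q j' j := by
          rw [Finset.sum_comm]
          exact Finset.sum_congr rfl fun i' _ => by rw [Finset.sum_mul]
  -- facts about the square roots
  have hc0 : ∀ k, (Real.sqrt (rr k) : ℂ) ≠ 0 := fun k => by
    simp [Complex.ofReal_eq_zero, Real.sqrt_eq_zero', not_le, hrpos k]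
  have hcc : ∀ k, (Real.sqrt (rr k) : ℂ) * ((Real.sqrt (rr k) : ℂ))⁻¹ = 1 :=
    fun k => mul_inv_cancel₀ (hc0 k)
  have hcsq : ∀ k, (Real.sqrt (rr k) : ℂ) * (Real.sqrt (rr k) : ℂ) = ((rr k : ℝ) : ℂ) :=
    fun k => by rw [← Complex.ofReal_mul, Real.mul_self_sqrt (hrpos k).le]
  have hcstarinv : ∀ k, star (((Real.sqrt (rr k) : ℂ))⁻¹) = ((Real.sqrt (rr k) : ℂ))⁻¹ :=
    fun k => by simp
  refine ⟨?_, ?_, ?_⟩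
  · -- complete positivity
    intro k' M hM
    obtain ⟨N, hN⟩ := psd_exists_conjTranspose_mul_self hM
    have hMapp : ∀ a b, M a b = ∑ y, star (N y a) * N y b := by
      intro a b; rw [hN]; simp [Matrix.mul_apply, Matrix.conjTranspose_apply]
    set V : Matrix ((Fin m × Fin n) × (Fin n × Fin k')) (Fin r × Fin k') ℂ :=
      Matrix.of (fun z p => star (((Real.sqrt (rr p.1) : ℂ))⁻¹
        * ∑ μ, ∑ i, C z.1 (i, μ) * star (N z.2 (μ, p.2)) * e p.1 i)) with hVdef
    have hVapp : ∀ z (k : Fin r) (s : Fin k'), star (V z (k,s))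
        = ((Real.sqrt (rr k) : ℂ))⁻¹ * ∑ μ, ∑ i, C z.1 (i, μ) * star (N z.2 (μ, s)) * e k i := by
      intro z k s; rw [hVdef]; simp only [Matrix.of_apply, star_star]
    have hVapp2 : ∀ z (l : Fin r) (t : Fin k'), V z (l,t)
        = ((Real.sqrt (rr l) : ℂ))⁻¹
          * ∑ ν, ∑ j, star (C z.1 (j, ν)) * N z.2 (ν, t) * star (e l j) := by
      intro z l t; rw [hVdef]
      simp only [Matrix.of_apply, star_mul', star_sum, star_star, hcstarinv]
    have key : (Matrix.of fun p q : Fin r × Fin k' =>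
        T (Matrix.of fun μ ν => M (μ, p.2) (ν, q.2)) p.1 q.1) = Vᴴ * V := by
      ext ⟨k,s⟩ ⟨l,t⟩
      rw [Matrix.of_apply, Matrix.mul_apply, hT]
      calc ∑ μ, ∑ ν, (Matrix.of fun μ ν => M (μ, s) (ν, t)) μ ν
            * ((Real.sqrt (rr k) : ℂ))⁻¹ * ((Real.sqrt (rr l) : ℂ))⁻¹
            * (∑ j, ∑ i, ρ (j, ν) (i, μ) * e k i * star (e l j))
          = ∑ μ, ∑ ν, ∑ y, ∑ j, ∑ i, ∑ x,
              (star (N y (μ,s)) * N y (ν,t)) * (star (C x (j,ν)) * C x (i,μ))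
              * (((Real.sqrt (rr k) : ℂ))⁻¹ * ((Real.sqrt (rr l) : ℂ))⁻¹
                * e k i * star (e l j)) := by
            refine Finset.sum_congr rfl fun μ _ => Finset.sum_congr rfl fun ν _ => ?_
            rw [Matrix.of_apply, hMapp, Finset.sum_mul, Finset.sum_mul, Finset.sum_mul]
            refine Finset.sum_congr rfl fun y _ => ?_
            rw [Finset.mul_sum]
            refine Finset.sum_congr rfl fun j _ => ?_
            rw [Finset.mul_sum]
            refine Finset.sum_congr rfl fun i _ => ?_
            rw [hρapp, Finset.sum_mul, Finset.sum_mul, Finset.mul_sum]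
            exact Finset.sum_congr rfl fun x _ => by ring
        _ = ∑ x, ∑ y, ∑ μ, ∑ i, ∑ ν, ∑ j,
              (star (N y (μ,s)) * N y (ν,t)) * (star (C x (j,ν)) * C x (i,μ))
              * (((Real.sqrt (rr k) : ℂ))⁻¹ * ((Real.sqrt (rr l) : ℂ))⁻¹
                * e k i * star (e l j)) :=
            scA (fun μ ν y j i x => (star (N y (μ,s)) * N y (ν,t))
              * (star (C x (j,ν)) * C x (i,μ))
              * (((Real.sqrt (rr k) : ℂ))⁻¹ * ((Real.sqrt (rr l) : ℂ))⁻¹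
                * e k i * star (e l j)))
        _ = ∑ x, ∑ y, ∑ μ, ∑ ν, ∑ i, ∑ j,
              (star (N y (μ,s)) * N y (ν,t)) * (star (C x (j,ν)) * C x (i,μ))
              * (((Real.sqrt (rr k) : ℂ))⁻¹ * ((Real.sqrt (rr l) : ℂ))⁻¹
                * e k i * star (e l j)) :=
            Finset.sum_congr rfl fun x _ => Finset.sum_congr rfl fun y _ =>
              Finset.sum_congr rfl fun μ _ => Finset.sum_comm
        _ = ∑ x, ∑ y, star (V (x,y) (k,s)) * V (x,y) (l,t) := by
            refine Finset.sum_congr rfl fun x _ => Finset.sum_congr rfl fun y _ => ?_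
            rw [hVapp, hVapp2, mul_mul_mul_comm, Finset.sum_mul_sum, Finset.mul_sum]
            refine Finset.sum_congr rfl fun μ _ => ?_
            rw [Finset.mul_sum]
            refine Finset.sum_congr rfl fun ν _ => ?_
            rw [Finset.sum_mul_sum, Finset.mul_sum]
            refine Finset.sum_congr rfl fun i _ => ?_
            rw [Finset.mul_sum]
            exact Finset.sum_congr rfl fun j _ => by ring
        _ = ∑ z, Vᴴ (k,s) z * V z (l,t) := by
            rw [Fintype.sum_prod_type
              (fun z : (Fin m × Fin n) × (Fin n × Fin k') => Vᴴ (k,s) z * V z (l,t))]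
            simp only [Matrix.conjTranspose_apply]
    rw [key]
    exact Matrix.posSemidef_conjTranspose_mul_self V
  · -- unitality
    ext k l
    rw [hT]
    calc ∑ μ, ∑ ν, (1 : Matrix (Fin n) (Fin n) ℂ) μ ν
          * ((Real.sqrt (rr k) : ℂ))⁻¹ * ((Real.sqrt (rr l) : ℂ))⁻¹
          * (∑ j, ∑ i, ρ (j, ν) (i, μ) * e k i * star (e l j))
        = ∑ μ, ((Real.sqrt (rr k) : ℂ))⁻¹ * ((Real.sqrt (rr l) : ℂ))⁻¹
            * (∑ j, ∑ i, ρ (j, μ) (i, μ) * e k i * star (e l j)) := by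
          refine Finset.sum_congr rfl fun μ _ => ?_
          simp only [Matrix.one_apply, ite_mul, one_mul, zero_mul, Finset.sum_ite_eq,
            Finset.mem_univ, if_true]
      _ = ∑ μ, ∑ j, ∑ i, ρ (j, μ) (i, μ)
            * (((Real.sqrt (rr k) : ℂ))⁻¹ * ((Real.sqrt (rr l) : ℂ))⁻¹
              * (e k i * star (e l j))) := by
          refine Finset.sum_congr rfl fun μ _ => ?_
          rw [Finset.mul_sum]
          refine Finset.sum_congr rfl fun j _ => ?_
          rw [Finset.mul_sum]
          exact Finset.sum_congr rfl fun i _ => by ring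
      _ = ∑ j, ∑ i, ∑ μ, ρ (j, μ) (i, μ)
            * (((Real.sqrt (rr k) : ℂ))⁻¹ * ((Real.sqrt (rr l) : ℂ))⁻¹
              * (e k i * star (e l j))) :=
          (sc3 (fun j i μ => ρ (j, μ) (i, μ)
            * (((Real.sqrt (rr k) : ℂ))⁻¹ * ((Real.sqrt (rr l) : ℂ))⁻¹
              * (e k i * star (e l j))))).symm
      _ = ∑ j, ∑ i, (∑ a, (rr a : ℂ) * e a j * star (e a i))
            * (((Real.sqrt (rr k) : ℂ))⁻¹ * ((Real.sqrt (rr l) : ℂ))⁻¹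
              * (e k i * star (e l j))) := by
          refine Finset.sum_congr rfl fun j _ => Finset.sum_congr rfl fun i _ => ?_
          rw [← Finset.sum_mul, hspec j i]
      _ = ∑ j, ∑ i, ∑ a, (rr a : ℂ) * e a j * star (e a i)
            * (((Real.sqrt (rr k) : ℂ))⁻¹ * ((Real.sqrt (rr l) : ℂ))⁻¹
              * (e k i * star (e l j))) := by
          refine Finset.sum_congr rfl fun j _ => Finset.sum_congr rfl fun i _ => ?_
          rw [Finset.sum_mul]
      _ = ∑ a, ∑ j, ∑ i, (rr a : ℂ) * e a j * star (e a i)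
            * (((Real.sqrt (rr k) : ℂ))⁻¹ * ((Real.sqrt (rr l) : ℂ))⁻¹
              * (e k i * star (e l j))) := sc3 _
      _ = ∑ a, ((rr a : ℂ) * (((Real.sqrt (rr k) : ℂ))⁻¹ * ((Real.sqrt (rr l) : ℂ))⁻¹))
            * ((∑ j, e a j * star (e l j)) * (∑ i, star (e a i) * e k i)) := by
          refine Finset.sum_congr rfl fun a _ => ?_
          rw [Finset.sum_mul_sum, Finset.mul_sum]
          refine Finset.sum_congr rfl fun j _ => ?_
          rw [Finset.mul_sum]
          exact Finset.sum_congr rfl fun i _ => by ring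
      _ = (1 : Matrix (Fin r) (Fin r) ℂ) k l := by
          simp only [he, he']
          by_cases h : k = l
          · subst h
            have hcol : ∀ a : Fin r, ((rr a : ℂ)
                  * (((Real.sqrt (rr k) : ℂ))⁻¹ * ((Real.sqrt (rr k) : ℂ))⁻¹))
                * ((if a = k then (1:ℂ) else 0) * (if a = k then (1:ℂ) else 0))
                = if a = k then (rr a : ℂ)
                    * (((Real.sqrt (rr k) : ℂ))⁻¹ * ((Real.sqrt (rr k) : ℂ))⁻¹) else 0 := by
              intro a; by_cases h1 : a = k <;> simp [h1]
            rw [Finset.sum_congr rfl fun a _ => hcol a]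
            rw [Finset.sum_ite_eq' Finset.univ k
              (fun a => (rr a : ℂ) * (((Real.sqrt (rr k) : ℂ))⁻¹ * ((Real.sqrt (rr k) : ℂ))⁻¹))]
            simp only [Finset.mem_univ, if_true, Matrix.one_apply_eq]
            rw [show ((rr k : ℂ)) * (((Real.sqrt (rr k) : ℂ))⁻¹ * ((Real.sqrt (rr k) : ℂ))⁻¹)
                = ((Real.sqrt (rr k) : ℂ) * ((Real.sqrt (rr k) : ℂ))⁻¹)
                  * ((Real.sqrt (rr k) : ℂ) * ((Real.sqrt (rr k) : ℂ))⁻¹) from by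
              rw [← hcsq k]; ring]
            rw [hcc k, one_mul]
          · rw [Matrix.one_apply_ne h]
            refine Finset.sum_eq_zero fun a _ => ?_
            by_cases h1 : a = l
            · subst h1
              simp [Ne.symm h, h]
            · simp [h1]
  · -- duality
    intro A B
    have hΨstar : ∀ p, star (Ψ p) = (Real.sqrt (rr p.2) : ℂ) * star (e p.2 p.1) := by
      intro p; rw [hΨ, star_mul']; simp
    have hL : (ρ * Matrix.of fun p q : Fin m × Fin n => A p.1 q.1 * B p.2 q.2).trace
        = ∑ i, ∑ j, ∑ μ, ∑ ν, ∑ k, ∑ l,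
            (A j i * B μ ν) * (e k i * star (e l j))
            * (∑ j', ∑ i', ρ (j', ν) (i', μ) * e l i' * star (e k j')) := by
      calc (ρ * Matrix.of fun p q : Fin m × Fin n => A p.1 q.1 * B p.2 q.2).trace
          = ∑ i, ∑ μ, ∑ j, ∑ ν, ρ (i,μ) (j,ν) * (A j i * B ν μ) := by
            simp [Matrix.trace, Matrix.diag, Matrix.mul_apply, Fintype.sum_prod_type]
        _ = ∑ i, ∑ μ, ∑ j, ∑ ν,
              (∑ i', ∑ j', Q i i' * ρ (i',μ) (j',ν) * Q j' j) * (A j i * B ν μ) := by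
            refine Finset.sum_congr rfl fun i _ => Finset.sum_congr rfl fun μ _ =>
              Finset.sum_congr rfl fun j _ => Finset.sum_congr rfl fun ν _ => ?_
            rw [hkey i μ j ν]
        _ = ∑ i, ∑ j, ∑ μ, ∑ ν, A j i * B μ ν
              * (∑ j', ∑ i', Q i j' * ρ (j',ν) (i',μ) * Q i' j) := by
            refine Finset.sum_congr rfl fun i _ => ?_
            rw [Finset.sum_comm]
            refine Finset.sum_congr rfl fun j _ => ?_
            rw [Finset.sum_comm]
            exact Finset.sum_congr rfl fun a _ => Finset.sum_congr rfl fun b _ => by ring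
        _ = ∑ i, ∑ j, ∑ μ, ∑ ν, ∑ k, ∑ l,
              (A j i * B μ ν) * (e k i * star (e l j))
              * (∑ j', ∑ i', ρ (j', ν) (i', μ) * e l i' * star (e k j')) := by
            refine Finset.sum_congr rfl fun i _ => Finset.sum_congr rfl fun j _ =>
              Finset.sum_congr rfl fun μ _ => Finset.sum_congr rfl fun ν _ => ?_
            calc A j i * B μ ν * (∑ j', ∑ i', Q i j' * ρ (j',ν) (i',μ) * Q i' j)
                = ∑ j', ∑ i', (A j i * B μ ν) * (Q i j' * ρ (j',ν) (i',μ) * Q i' j) := by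
                  rw [Finset.mul_sum]
                  refine Finset.sum_congr rfl fun j' _ => ?_
                  rw [Finset.mul_sum]
              _ = ∑ j', ∑ i', ∑ k, ∑ l, (A j i * B μ ν)
                    * (e k i * star (e l j)) * (ρ (j', ν) (i', μ) * e l i' * star (e k j')) := by
                  refine Finset.sum_congr rfl fun j' _ => Finset.sum_congr rfl fun i' _ => ?_
                  rw [hQapp, hQapp, Finset.sum_mul, Finset.sum_mul, Finset.mul_sum]
                  refine Finset.sum_congr rfl fun k _ => ?_
                  rw [Finset.mul_sum, Finset.mul_sum]
                  exact Finset.sum_congr rfl fun l _ => by ring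
              _ = ∑ k, ∑ l, ∑ j', ∑ i', (A j i * B μ ν)
                    * (e k i * star (e l j)) * (ρ (j', ν) (i', μ) * e l i' * star (e k j')) :=
                  sc4 _
              _ = ∑ k, ∑ l, (A j i * B μ ν) * (e k i * star (e l j))
                    * (∑ j', ∑ i', ρ (j', ν) (i', μ) * e l i' * star (e k j')) := by
                  refine Finset.sum_congr rfl fun k _ => Finset.sum_congr rfl fun l _ => ?_
                  rw [Finset.mul_sum]
                  refine Finset.sum_congr rfl fun j' _ => ?_
                  rw [Finset.mul_sum]
    have hR : ((Matrix.of fun p q : Fin m × Fin r => Ψ p * star (Ψ q))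
          * Matrix.of fun p q : Fin m × Fin r => A p.1 q.1 * T B p.2 q.2).trace
        = ∑ i, ∑ j, ∑ μ, ∑ ν, ∑ k, ∑ l,
            (A j i * B μ ν) * (e k i * star (e l j))
            * (∑ j', ∑ i', ρ (j', ν) (i', μ) * e l i' * star (e k j')) := by
      calc ((Matrix.of fun p q : Fin m × Fin r => Ψ p * star (Ψ q))
            * Matrix.of fun p q : Fin m × Fin r => A p.1 q.1 * T B p.2 q.2).trace
          = ∑ i, ∑ k, ∑ j, ∑ l, (Ψ (i,k) * star (Ψ (j,l))) * (A j i * T B l k) := by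
            simp [Matrix.trace, Matrix.diag, Matrix.mul_apply, Fintype.sum_prod_type]
        _ = ∑ i, ∑ k, ∑ j, ∑ l, ∑ μ, ∑ ν,
              (A j i * B μ ν) * (e k i * star (e l j))
              * (∑ j', ∑ i', ρ (j', ν) (i', μ) * e l i' * star (e k j')) := by
            refine Finset.sum_congr rfl fun i _ => Finset.sum_congr rfl fun k _ =>
              Finset.sum_congr rfl fun j _ => Finset.sum_congr rfl fun l _ => ?_
            rw [hΨ, hΨstar, hT]
            rw [Finset.mul_sum]
            rw [Finset.mul_sum]
            refine Finset.sum_congr rfl fun μ _ => ?_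
            rw [Finset.mul_sum, Finset.mul_sum]
            refine Finset.sum_congr rfl fun ν _ => ?_
            rw [show (Real.sqrt (rr k) : ℂ) * e k i * ((Real.sqrt (rr l) : ℂ) * star (e l j))
                * (A j i * (B μ ν * ((Real.sqrt (rr l) : ℂ))⁻¹ * ((Real.sqrt (rr k) : ℂ))⁻¹
                  * (∑ j', ∑ i', ρ (j', ν) (i', μ) * e l i' * star (e k j'))))
                = ((Real.sqrt (rr k) : ℂ) * ((Real.sqrt (rr k) : ℂ))⁻¹)
                  * (((Real.sqrt (rr l) : ℂ)) * ((Real.sqrt (rr l) : ℂ))⁻¹)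
                  * ((A j i * B μ ν) * (e k i * star (e l j))
                    * (∑ j', ∑ i', ρ (j', ν) (i', μ) * e l i' * star (e k j'))) from by ring]
            rw [hcc k, hcc l, one_mul, one_mul]
        _ = ∑ i, ∑ j, ∑ k, ∑ l, ∑ μ, ∑ ν,
              (A j i * B μ ν) * (e k i * star (e l j))
              * (∑ j', ∑ i', ρ (j', ν) (i', μ) * e l i' * star (e k j')) :=
            Finset.sum_congr rfl fun i _ => Finset.sum_comm
        _ = ∑ i, ∑ j, ∑ μ, ∑ ν, ∑ k, ∑ l,
              (A j i * B μ ν) * (e k i * star (e l j))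
              * (∑ j', ∑ i', ρ (j', ν) (i', μ) * e l i' * star (e k j')) :=
            Finset.sum_congr rfl fun i _ => Finset.sum_congr rfl fun j _ =>
              sc4 _
    rw [hL, hR]
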